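/- Let X_1, X_2, ... be i.i.d. uniform on [0,1] and for each n let g_n(ω) denote the maximal gap determined by X_1(ω),...,X_n(ω) together with the endpoints 0 and 1. Then for any fixed L > 0, P(g_n ≥ L/n) ≤ (n+1)·(1 - L/(2n))^n for n ≥ 2L; in particular P(n·g_n ≥ 4·ln n) → 0 as n → ∞. -/

import Mathlib

open Set MeasureTheory ProbabilityTheory Filter

lemma aux_single {Ω : Type*} [MeasureSpace Ω] [IsProbabilityMeasure (ℙ : Measure Ω)]
    (X : ℕ → Ω → ℝ) (hmeas : ∀ k, Measurable (X k))
    (hunif : ∀ k, Measure.map (X k) ℙ = (volume : Measure ℝ).restrict (Icc 0 1))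
    (k : ℕ) {a b : ℝ} (ha : 0 ≤ a) (hab : a ≤ b) (hb : b ≤ 1) :
    ℙ (X k ⁻¹' (Ioo a b)ᶜ) = ENNReal.ofReal (1 - (b - a)) := by
  rw [← Measure.map_apply (hmeas k) measurableSet_Ioo.compl, hunif k,
    Measure.restrict_apply measurableSet_Ioo.compl]
  have hsub : Ioo a b ⊆ Icc 0 1 := fun x hx => ⟨le_trans ha hx.1.le, le_trans hx.2.le hb⟩
  have : (Ioo a b)ᶜ ∩ Icc 0 1 = Icc 0 1 \ Ioo a b := by
    ext x; simp [mem_diff, and_comm]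
  rw [this, measure_diff hsub measurableSet_Ioo.nullMeasurableSet (by simp),
    Real.volume_Icc, Real.volume_Ioo, ← ENNReal.ofReal_sub _ (by linarith)]
  norm_num

lemma aux_prod {Ω : Type*} [MeasureSpace Ω] [IsProbabilityMeasure (ℙ : Measure Ω)]
    (X : ℕ → Ω → ℝ) (hmeas : ∀ k, Measurable (X k))
    (hindep : iIndepFun X ℙ)
    (hunif : ∀ k, Measure.map (X k) ℙ = (volume : Measure ℝ).restrict (Icc 0 1))
    (n : ℕ) {a b : ℝ} (ha : 0 ≤ a) (hab : a ≤ b) (hb : b ≤ 1) :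
    ℙ {ω | ∀ k ∈ Finset.range n, X k ω ∉ Ioo a b} = ENNReal.ofReal ((1 - (b - a)) ^ n) := by
  have hset : {ω | ∀ k ∈ Finset.range n, X k ω ∉ Ioo a b}
      = ⋂ k ∈ Finset.range n, X k ⁻¹' (Ioo a b)ᶜ := by
    ext ω; simp
  rw [hset, hindep.meas_biInter (fun i _ => ⟨(Ioo a b)ᶜ, measurableSet_Ioo.compl, rfl⟩)]
  have : ∀ i ∈ Finset.range n, ℙ (X i ⁻¹' (Ioo a b)ᶜ) = ENNReal.ofReal (1 - (b - a)) :=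
    fun i _ => aux_single X hmeas hunif i ha hab hb
  rw [Finset.prod_congr rfl this, Finset.prod_const, Finset.card_range,
    ← ENNReal.ofReal_pow (by linarith)]

lemma aux_main {Ω : Type*} [MeasureSpace Ω] [IsProbabilityMeasure (ℙ : Measure Ω)]
    (X : ℕ → Ω → ℝ) (hmeas : ∀ k, Measurable (X k))
    (hindep : iIndepFun X ℙ)
    (hunif : ∀ k, Measure.map (X k) ℙ = (volume : Measure ℝ).restrict (Icc 0 1))
    (n : ℕ) (L : ℝ) (hL : 0 < L) (h2L : 2 * L ≤ n) :
    ℙ {ω | ∃ u v : ℝ, 0 ≤ u ∧ v ≤ 1 ∧ L / n ≤ v - u ∧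
        ∀ k ∈ Finset.range n, X k ω ∉ Ioo u v}
      ≤ ENNReal.ofReal (((n : ℝ) + 1) * (1 - L / (2 * n)) ^ n) := by
  have hn : 0 < (n : ℝ) := by linarith
  set h : ℝ := L / (2 * n) with hdef
  have hh : 0 < h := by positivity
  have hnh : (n : ℝ) * h = L / 2 := by field_simp [hdef]; rw [hdef]; field_simp
  have hh4 : h ≤ 1 / 4 := by
    rw [hdef, div_le_div_iff₀ (by linarith) (by norm_num)]; linarith
  have hLn : L / n = 2 * h := by rw [hdef]; field_simp
  have h1h : (0:ℝ) ≤ 1 - h := by linarith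
  by_cases hc : 2 * (n:ℝ) ≤ L * ((n : ℝ) + 1)
  · -- grid case
    set E : ℕ → Set Ω := fun j =>
      {ω | (j : ℝ) * h + h ≤ 1 ∧ ∀ k ∈ Finset.range n, X k ω ∉ Ioo ((j : ℝ) * h) ((j : ℝ) * h + h)}
      with hE
    have hsub : {ω | ∃ u v : ℝ, 0 ≤ u ∧ v ≤ 1 ∧ L / n ≤ v - u ∧
        ∀ k ∈ Finset.range n, X k ω ∉ Ioo u v} ⊆ ⋃ j ∈ Finset.range (n + 1), E j := by
      rintro ω ⟨u, v, hu, hv, hlen, hav⟩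
      rw [hLn] at hlen
      set j : ℕ := ⌈u / h⌉₊ with hj
      have hju : u ≤ (j : ℝ) * h := by
        rw [← div_le_iff₀ hh]; exact Nat.le_ceil _
      have hju' : (j : ℝ) * h < u + h := by
        have := Nat.ceil_lt_add_one (show (0:ℝ) ≤ u / h by positivity)
        calc (j : ℝ) * h < (u / h + 1) * h := by
              apply mul_lt_mul_of_pos_right _ hh; exact_mod_cast this
          _ = u + h := by field_simp
      have hjv : (j : ℝ) * h + h ≤ v := by linarith
      have hj1 : (j : ℝ) * h + h ≤ 1 := le_trans hjv hv
      have hjn : j < n + 1 := by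
        have h3 : (j : ℝ) + 1 ≤ 1 / h := by
          rw [le_div_iff₀ hh]; linarith
        have h4 : 1 / h ≤ (n : ℝ) + 1 := by
          rw [hdef, one_div_div, div_le_iff₀ hL]; linarith
        have : (j : ℝ) < (n : ℝ) + 1 := by linarith
        exact_mod_cast lt_of_le_of_lt (by exact_mod_cast Nat.cast_le.mpr (le_refl j))
          (by exact_mod_cast this)
      refine mem_biUnion (Finset.mem_range.mpr hjn) ?_
      refine ⟨hj1, fun k hk hx => hav k hk ?_⟩
      exact ⟨lt_of_le_of_lt hju hx.1, lt_of_lt_of_le hx.2 hjv⟩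
    calc ℙ _ ≤ ℙ (⋃ j ∈ Finset.range (n + 1), E j) := measure_mono hsub
      _ ≤ ∑ j ∈ Finset.range (n + 1), ℙ (E j) := measure_biUnion_finset_le _ _
      _ ≤ (Finset.range (n + 1)).card • ENNReal.ofReal ((1 - h) ^ n) := by
          apply Finset.sum_le_card_nsmul
          intro j _
          by_cases hj1 : (j : ℝ) * h + h ≤ 1
          · have : E j = {ω | ∀ k ∈ Finset.range n, X k ω ∉ Ioo ((j : ℝ) * h) ((j : ℝ) * h + h)} := by
              ext ω; simp [hE, hj1]
            rw [this, aux_prod X hmeas hindep hunif n (by positivity) (by linarith) hj1]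
            simp
          · have : E j = ∅ := by
              ext ω; simp [hE]; intro hcon; exact absurd hcon hj1
            simp [this]
      _ = ENNReal.ofReal (((n : ℝ) + 1) * (1 - h) ^ n) := by
          rw [Finset.card_range, nsmul_eq_mul, ENNReal.ofReal_mul (by positivity),
            ← ENNReal.ofReal_natCast]
          push_cast
          ring_nf
  · -- trivial case : bound is ≥ 1
    push_neg at hc
    have hb : (1:ℝ) ≤ ((n : ℝ) + 1) * (1 - h) ^ n := by
      have hbern : 1 + (n : ℝ) * (-h) ≤ (1 + -h) ^ n :=
        one_add_mul_le_pow (by linarith) n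
      have : 1 - L / 2 ≤ (1 - h) ^ n := by
        rw [show (1:ℝ) - h = 1 + -h by ring]
        calc 1 - L / 2 = 1 + (n : ℝ) * (-h) := by rw [mul_neg, hnh]; ring
          _ ≤ _ := hbern
      nlinarith [pow_nonneg h1h n]
    calc ℙ _ ≤ 1 := prob_le_one
      _ ≤ ENNReal.ofReal (((n : ℝ) + 1) * (1 - h) ^ n) := by
          rw [ENNReal.one_le_ofReal]; exact hb

/-- For i.i.d. uniform points on `[0,1]`, the maximal gap `g_n` (of the sorted points
together with the endpoints `0,1`) satisfies `P(g_n ≥ L/n) ≤ (n+1)(1 - L/(2n))^n` for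
`n ≥ 2L`; in particular `P(n g_n ≥ 4 log n) → 0`.  Here the event `g_n ≥ L/n` is expressed
as the existence of a subinterval of `[0,1]` of length at least `L/n` whose interior
contains none of the first `n` sample points. -/
theorem iid_uniform_max_gap_bound
    {Ω : Type*} [MeasureSpace Ω] [IsProbabilityMeasure (ℙ : Measure Ω)]
    (X : ℕ → Ω → ℝ)
    (hmeas : ∀ k, Measurable (X k))
    (hindep : iIndepFun X ℙ)
    (hunif : ∀ k, Measure.map (X k) ℙ = (volume : Measure ℝ).restrict (Icc 0 1)) :
    (∀ (n : ℕ) (L : ℝ), 0 < L → 2 * L ≤ n →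
      ℙ {ω | ∃ u v : ℝ, 0 ≤ u ∧ v ≤ 1 ∧ L / n ≤ v - u ∧
          ∀ k ∈ Finset.range n, X k ω ∉ Ioo u v}
        ≤ ENNReal.ofReal (((n : ℝ) + 1) * (1 - L / (2 * n)) ^ n)) ∧
    Tendsto (fun n : ℕ => ℙ {ω | ∃ u v : ℝ, 0 ≤ u ∧ v ≤ 1 ∧ 4 * Real.log n / n ≤ v - u ∧
          ∀ k ∈ Finset.range n, X k ω ∉ Ioo u v}) atTop (nhds 0) := by
  refine ⟨fun n L hL h2L => aux_main X hmeas hindep hunif n L hL h2L, ?_⟩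
  -- eventual bound : 8 log n ≤ n
  have hlog : ∀ᶠ (n : ℕ) in atTop, 8 * Real.log n ≤ n := by
    have h1 : ∀ᶠ (x : ℝ) in atTop, ‖Real.log x‖ ≤ (1/8) * ‖x‖ :=
      Real.isLittleO_log_id_atTop.def (by norm_num)
    have h2 := (tendsto_natCast_atTop_atTop (R := ℝ)).eventually h1
    filter_upwards [h2] with n hn
    have h3 : Real.log n ≤ |Real.log n| := le_abs_self _
    rw [Real.norm_eq_abs, Real.norm_eq_abs, abs_of_nonneg (by positivity : (0:ℝ) ≤ (n:ℝ))] at hn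
    linarith
  have hev : ∀ᶠ (n : ℕ) in atTop,
      ℙ {ω | ∃ u v : ℝ, 0 ≤ u ∧ v ≤ 1 ∧ 4 * Real.log n / n ≤ v - u ∧
          ∀ k ∈ Finset.range n, X k ω ∉ Ioo u v} ≤ ENNReal.ofReal (2 / n) := by
    filter_upwards [hlog, eventually_ge_atTop 2] with n h8 hn2
    have hn1 : (1:ℝ) < n := by exact_mod_cast hn2
    have hn0 : (0:ℝ) < n := by linarith
    have hlogpos : 0 < Real.log n := Real.log_pos hn1
    have hbd := aux_main X hmeas hindep hunif n (4 * Real.log n) (by positivity) (by linarith)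
    refine le_trans hbd (ENNReal.ofReal_le_ofReal ?_)
    set x : ℝ := 2 * Real.log n / n with hxdef
    have hx4 : 4 * Real.log n / (2 * n) = x := by rw [hxdef]; field_simp; ring
    rw [hx4]
    have hx0 : 0 ≤ x := by positivity
    have hx1 : x ≤ 1 := by
      rw [hxdef, div_le_one hn0]; linarith
    have step1 : (1 - x) ^ n ≤ Real.exp (-x) ^ n := by
      apply pow_le_pow_left₀ (by linarith)
      linarith [Real.add_one_le_exp (-x)]
    have step2 : Real.exp (-x) ^ n = Real.exp (-(2 * Real.log n)) := by
      rw [← Real.exp_nat_mul]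
      congr 1
      rw [hxdef]; field_simp
    have step3 : Real.exp (-(2 * Real.log n)) = 1 / ((n:ℝ) * n) := by
      rw [Real.exp_neg, show 2 * Real.log n = Real.log n + Real.log n by ring,
        Real.exp_add, Real.exp_log hn0]
      rw [one_div]
    have key : (1 - x) ^ n ≤ 1 / ((n:ℝ) * n) := by rw [← step3, ← step2]; exact step1
    have hpos : (0:ℝ) ≤ (1 - x) ^ n := pow_nonneg (by linarith) n
    calc ((n:ℝ) + 1) * (1 - x) ^ n ≤ ((n:ℝ) + 1) * (1 / ((n:ℝ) * n)) := by
          apply mul_le_mul_of_nonneg_left key (by positivity)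
      _ ≤ 2 / (n:ℝ) := by
          rw [mul_one_div, div_le_div_iff₀ (by positivity) hn0]
          nlinarith
  have htop : Tendsto (fun n : ℕ => ENNReal.ofReal (2 / (n:ℝ))) atTop (nhds 0) := by
    have := ENNReal.tendsto_ofReal (tendsto_const_div_atTop_nhds_zero_nat 2)
    simpa using this
  exact tendsto_of_tendsto_of_tendsto_of_le_of_le' tendsto_const_nhds htop
    (Eventually.of_forall (fun n => zero_le)) hev
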